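/- arXiv:2301.09020 — 2 statements merged into one kernel-verified Lean document; each statement's English description precedes it below -/
import Mathlib

section
/- The failure product-limit estimator is the unique solution of Efron's self-consistency equation before the last observation time: if Ŝ : ℝ → ℝ satisfies Ŝ(t) = Y(t+)/n + (Ŝ(t)/n) · ∑_{u ≤ t} ΔC(u)/Ŝ(u) for every t with 0 < t < τ, then Ŝ(t) = Ŝ_PL(t) for every t with 0 < t < τ. -/
open Finset
open scoped Classical

noncomputable section

namespace SurvStmt

/-- The finite set of distinct observed times `{X_1, …, X_n}`. -/
def times {n : ℕ} (X : Fin n → ℝ) : Finset ℝ := Finset.image X Finset.univ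

/-- `Y(t) = #{i : X_i ≥ t}`, as a real number. -/
def Yat {n : ℕ} (X : Fin n → ℝ) (t : ℝ) : ℝ :=
  ((Finset.univ.filter (fun i => t ≤ X i)).card : ℝ)

/-- `Y(t+) = #{i : X_i > t}`, as a real number. -/
def Yplus {n : ℕ} (X : Fin n → ℝ) (t : ℝ) : ℝ :=
  ((Finset.univ.filter (fun i => t < X i)).card : ℝ)

/-- `ΔN(t) = #{i : X_i = t, D_i = 1}`, as a real number. -/
def dN {n : ℕ} (X : Fin n → ℝ) (D : Fin n → Bool) (t : ℝ) : ℝ :=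
  ((Finset.univ.filter (fun i => X i = t ∧ D i = true)).card : ℝ)

/-- `ΔC(t) = #{i : X_i = t, D_i = 0}`, as a real number. -/
def dC {n : ℕ} (X : Fin n → ℝ) (D : Fin n → Bool) (t : ℝ) : ℝ :=
  ((Finset.univ.filter (fun i => X i = t ∧ D i = false)).card : ℝ)

/-- `Y†(t) = Y(t) − ΔN(t)`. -/
def Ydag {n : ℕ} (X : Fin n → ℝ) (D : Fin n → Bool) (t : ℝ) : ℝ :=
  Yat X t - dN X D t

/-- `τ = max_i X_i`, the largest observation time (0 if there is no data). -/
def tau {n : ℕ} (X : Fin n → ℝ) : ℝ := ((times X).max).unbotD 0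

/-- Censoring product-limit estimator `K̂(t) = ∏_{u ≤ t} (1 − ΔC(u)/Y†(u))`. -/
def Khat {n : ℕ} (X : Fin n → ℝ) (D : Fin n → Bool) (t : ℝ) : ℝ :=
  ∏ u ∈ (times X).filter (fun u => u ≤ t), (1 - dC X D u / Ydag X D u)

/-- Left limit `K̂(t−) = ∏_{u < t} (1 − ΔC(u)/Y†(u))`. -/
def Kminus {n : ℕ} (X : Fin n → ℝ) (D : Fin n → Bool) (t : ℝ) : ℝ :=
  ∏ u ∈ (times X).filter (fun u => u < t), (1 - dC X D u / Ydag X D u)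

/-- Failure product-limit estimator `Ŝ_PL(t) = ∏_{u ≤ t} (1 − ΔN(u)/Y(u))`. -/
def SPL {n : ℕ} (X : Fin n → ℝ) (D : Fin n → Bool) (t : ℝ) : ℝ :=
  ∏ u ∈ (times X).filter (fun u => u ≤ t), (1 - dN X D u / Yat X u)

/-- Left limit `Ŝ_PL(t−) = ∏_{u < t} (1 − ΔN(u)/Y(u))`. -/
def SPLminus {n : ℕ} (X : Fin n → ℝ) (D : Fin n → Bool) (t : ℝ) : ℝ :=
  ∏ u ∈ (times X).filter (fun u => u < t), (1 - dN X D u / Yat X u)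

/-- IPCW estimator `F̂_IPCW(t) = (1/n) ∑_i D_i 1{X_i ≤ t} / K̂(X_i−)`. -/
def FIPCW {n : ℕ} (X : Fin n → ℝ) (D : Fin n → Bool) (t : ℝ) : ℝ :=
  (1 / (n : ℝ)) * ∑ i : Fin n,
    (if D i = true then (1 : ℝ) else 0) * (if X i ≤ t then (1 : ℝ) else 0) / Kminus X D (X i)

/-- IPCW survival estimator `S̃_IPCW(t) = (1/n) ∑_i D_i 1{X_i > t} / K̂(X_i−)`. -/
def SIPCW {n : ℕ} (X : Fin n → ℝ) (D : Fin n → Bool) (t : ℝ) : ℝ :=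
  (1 / (n : ℝ)) * ∑ i : Fin n,
    (if D i = true then (1 : ℝ) else 0) * (if t < X i then (1 : ℝ) else 0) / Kminus X D (X i)

/-- RTTR jump weight `J(v) = 1/(n · K̂(v−))`. -/
def Jw {n : ℕ} (X : Fin n → ℝ) (D : Fin n → Bool) (v : ℝ) : ℝ :=
  1 / ((n : ℝ) * Kminus X D v)

/-- Redistribute-to-the-right estimator
`Ŝ_RTTR(t) = 1 − ∑_{v ≤ t} [J(v) ΔN(v) 1{v < τ} + J(τ) Y(τ) 1{v = τ}]`. -/
def SRTTR {n : ℕ} (X : Fin n → ℝ) (D : Fin n → Bool) (t : ℝ) : ℝ :=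
  1 - ∑ v ∈ (times X).filter (fun v => v ≤ t),
      (Jw X D v * dN X D v * (if v < tau X then (1 : ℝ) else 0)
        + Jw X D (tau X) * Yat X (tau X) * (if v = tau X then (1 : ℝ) else 0))
section Helpers
variable {n : ℕ} (X : Fin n → ℝ) (D : Fin n → Bool)

lemma mem_times_iff {u : ℝ} : u ∈ times X ↔ ∃ i, X i = u := by
  simp [times]

lemma pos_of_mem_times (hX : ∀ i, 0 < X i) {u : ℝ} (hu : u ∈ times X) : 0 < u := by
  obtain ⟨i, hi⟩ := (mem_times_iff X).1 hu
  exact hi ▸ hX i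

lemma times_nonempty (hn : 0 < n) : (times X).Nonempty :=
  ⟨X ⟨0, hn⟩, (mem_times_iff X).2 ⟨⟨0, hn⟩, rfl⟩⟩

lemma tau_eq_max' (hn : 0 < n) : tau X = (times X).max' (times_nonempty X hn) := by
  unfold tau
  rw [← Finset.coe_max' (times_nonempty X hn)]
  rfl

lemma tau_mem (hn : 0 < n) : tau X ∈ times X := by
  rw [tau_eq_max' X hn]; exact Finset.max'_mem _ _

lemma le_tau (hn : 0 < n) {u : ℝ} (hu : u ∈ times X) : u ≤ tau X := by
  rw [tau_eq_max' X hn]; exact Finset.le_max' _ _ hu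

lemma count_split (t : ℝ) : Yat X t = Yplus X t + dN X D t + dC X D t := by
  unfold Yat Yplus dN dC
  rw [Finset.card_filter, Finset.card_filter, Finset.card_filter, Finset.card_filter]
  push_cast
  rw [← Finset.sum_add_distrib, ← Finset.sum_add_distrib]
  apply Finset.sum_congr rfl
  intro i _
  rcases lt_trichotomy t (X i) with h | h | h
  · have h1 : t ≤ X i := le_of_lt h
    have h2 : X i ≠ t := ne_of_gt h
    simp [h, h1, h2]
  · have h1 : t ≤ X i := le_of_eq h
    have h2 : X i = t := h.symm
    rcases Bool.eq_false_or_eq_true (D i) with hd | hd <;>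
      simp [h1, h2, hd, not_lt.2 (le_of_eq h2)]
  · have h1 : ¬ t ≤ X i := not_le.2 h
    have h2 : X i ≠ t := ne_of_lt h
    simp [h1, h2, not_lt.2 h.le]

lemma dN_nonneg (t : ℝ) : 0 ≤ dN X D t := by unfold dN; positivity
lemma dC_nonneg (t : ℝ) : 0 ≤ dC X D t := by unfold dC; positivity

lemma Yplus_pos (hn : 0 < n) {t : ℝ} (ht : t < tau X) : 0 < Yplus X t := by
  obtain ⟨i, hi⟩ := (mem_times_iff X).1 (tau_mem X hn)
  unfold Yplus
  have : i ∈ Finset.univ.filter (fun i => t < X i) := by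
    simp [hi.symm ▸ ht]
  have := Finset.card_pos.2 ⟨i, this⟩
  exact_mod_cast this

lemma Yat_pos (hn : 0 < n) {t : ℝ} (ht : t ≤ tau X) : 0 < Yat X t := by
  obtain ⟨i, hi⟩ := (mem_times_iff X).1 (tau_mem X hn)
  unfold Yat
  have : i ∈ Finset.univ.filter (fun i => t ≤ X i) := by
    simp [hi.symm ▸ ht]
  have := Finset.card_pos.2 ⟨i, this⟩
  exact_mod_cast this

lemma Ydag_eq (t : ℝ) : Ydag X D t = Yplus X t + dC X D t := by
  unfold Ydag; rw [count_split X D t]; ring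

lemma Ydag_pos (hn : 0 < n) {t : ℝ} (ht : t < tau X) : 0 < Ydag X D t := by
  rw [Ydag_eq]
  have := Yplus_pos X hn ht
  have := dC_nonneg X D t
  linarith

lemma dN_of_not_mem {t : ℝ} (ht : t ∉ times X) : dN X D t = 0 := by
  unfold dN
  rw [Finset.filter_false_of_mem]
  · simp
  · intro i _ h
    exact ht ((mem_times_iff X).2 ⟨i, h.1⟩)

lemma dC_of_not_mem {t : ℝ} (ht : t ∉ times X) : dC X D t = 0 := by
  unfold dC
  rw [Finset.filter_false_of_mem]
  · simp
  · intro i _ h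
    exact ht ((mem_times_iff X).2 ⟨i, h.1⟩)

lemma filter_le_eq_of_mem {t : ℝ} (ht : t ∈ times X) :
    (times X).filter (fun u => u ≤ t)
      = insert t ((times X).filter (fun u => u < t)) := by
  ext u
  simp only [Finset.mem_filter, Finset.mem_insert]
  constructor
  · rintro ⟨hu, hle⟩
    rcases lt_or_eq_of_le hle with h | h
    · exact Or.inr ⟨hu, h⟩
    · exact Or.inl h
  · rintro (rfl | ⟨hu, hlt⟩)
    · exact ⟨ht, le_refl _⟩
    · exact ⟨hu, le_of_lt hlt⟩

lemma filter_le_eq_of_not_mem {t : ℝ} (ht : t ∉ times X) :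
    (times X).filter (fun u => u ≤ t)
      = (times X).filter (fun u => u < t) := by
  apply Finset.filter_congr
  intro u hu
  constructor
  · intro h
    rcases lt_or_eq_of_le h with h' | h'
    · exact h'
    · exact absurd (h' ▸ hu) ht
  · exact le_of_lt

lemma SPL_eq (t : ℝ) :
    SPL X D t = (1 - dN X D t / Yat X t) * SPLminus X D t := by
  by_cases ht : t ∈ times X
  · unfold SPL SPLminus
    rw [filter_le_eq_of_mem X ht, Finset.prod_insert (by simp)]
  · unfold SPL SPLminus
    rw [filter_le_eq_of_not_mem X ht, dN_of_not_mem X D ht]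
    simp

end Helpers
section Main
variable {n : ℕ} (X : Fin n → ℝ) (D : Fin n → Bool)

lemma base_Yat {t : ℝ} (hF : (times X).filter (fun u => u < t) = ∅) :
    Yat X t = n := by
  unfold Yat
  have huniv : Finset.univ.filter (fun i => t ≤ X i) = (Finset.univ : Finset (Fin n)) := by
    ext i
    simp only [Finset.mem_filter, Finset.mem_univ, true_and, iff_true]
    by_contra h
    have hXi : X i < t := not_le.1 h
    have hmem : X i ∈ (times X).filter (fun u => u < t) :=
      Finset.mem_filter.2 ⟨(mem_times_iff X).2 ⟨i, rfl⟩, hXi⟩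
    rw [hF] at hmem
    exact absurd hmem (Finset.notMem_empty _)
  rw [huniv]
  simp

lemma L1 (hn : 0 < n) (hX : ∀ i, 0 < X i) :
    ∀ k : ℕ, ∀ t : ℝ, ((times X).filter (fun u => u < t)).card ≤ k →
      0 < t → t ≤ tau X →
      (n : ℝ) * SPLminus X D t * Kminus X D t = Yat X t := by
  intro k
  induction k with
  | zero =>
    intro t hcard ht htau
    have hF : (times X).filter (fun u => u < t) = ∅ :=
      Finset.card_eq_zero.1 (Nat.le_zero.1 hcard)
    unfold SPLminus Kminus
    rw [hF]
    simp [base_Yat X hF]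
  | succ k ih =>
    intro t hcard ht htau
    by_cases hF : (times X).filter (fun u => u < t) = ∅
    · unfold SPLminus Kminus
      rw [hF]
      simp [base_Yat X hF]
    · have hne : ((times X).filter (fun u => u < t)).Nonempty :=
        Finset.nonempty_iff_ne_empty.2 hF
      set m := ((times X).filter (fun u => u < t)).max' hne with hm_def
      have hm_filt := Finset.max'_mem _ hne
      rw [Finset.mem_filter] at hm_filt
      obtain ⟨hm_mem, hm_lt⟩ := hm_filt
      have hins : (times X).filter (fun u => u < t)
          = insert m ((times X).filter (fun u => u < m)) := by
        ext u
        simp only [Finset.mem_filter, Finset.mem_insert]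
        constructor
        · rintro ⟨hu, hlt⟩
          rcases eq_or_lt_of_le (Finset.le_max' ((times X).filter (fun v => v < t)) u (Finset.mem_filter.2 ⟨hu, hlt⟩)) with h | h
          · exact Or.inl h
          · exact Or.inr ⟨hu, h⟩
        · rintro (rfl | ⟨hu, hlt⟩)
          · exact ⟨hm_mem, hm_lt⟩
          · exact ⟨hu, hlt.trans hm_lt⟩
      have hnm : m ∉ (times X).filter (fun u => u < m) := by simp
      have hcard' : ((times X).filter (fun u => u < m)).card ≤ k := by
        have h2 := hcard
        rw [hins, Finset.card_insert_of_notMem hnm] at h2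
        omega
      have hm_pos : 0 < m := pos_of_mem_times X hX hm_mem
      have hm_tau : m ≤ tau X := le_tau X hn hm_mem
      have hm_lt_tau : m < tau X := lt_of_lt_of_le hm_lt htau
      have hIH := ih m hcard' hm_pos hm_tau
      have hYt : Yat X t = Yplus X m := by
        unfold Yat Yplus
        congr 2
        ext i
        simp only [Finset.mem_filter, Finset.mem_univ, true_and]
        constructor
        · intro h
          exact lt_of_lt_of_le hm_lt h
        · intro h
          by_contra hc
          have hXi : X i < t := not_le.1 hc
          have hle : X i ≤ m :=
            Finset.le_max' ((times X).filter (fun v => v < t)) (X i) (Finset.mem_filter.2 ⟨(mem_times_iff X).2 ⟨i, rfl⟩, hXi⟩)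
          exact absurd h (not_lt.2 hle)
      have hYat_m : 0 < Yat X m := Yat_pos X hn hm_tau
      have hYdag_m : 0 < Ydag X D m := Ydag_pos X D hn hm_lt_tau
      have hSm : SPLminus X D t = (1 - dN X D m / Yat X m) * SPLminus X D m := by
        unfold SPLminus
        rw [hins, Finset.prod_insert hnm]
      have hKm : Kminus X D t = (1 - dC X D m / Ydag X D m) * Kminus X D m := by
        unfold Kminus
        rw [hins, Finset.prod_insert hnm]
      have e1 : Yat X m * (1 - dN X D m / Yat X m) = Ydag X D m := by
        rw [mul_sub, mul_one, mul_div_cancel₀ _ (ne_of_gt hYat_m)]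
        rfl
      have e2 : Ydag X D m * (1 - dC X D m / Ydag X D m) = Yplus X m := by
        rw [mul_sub, mul_one, mul_div_cancel₀ _ (ne_of_gt hYdag_m), Ydag_eq]
        ring
      calc (n : ℝ) * SPLminus X D t * Kminus X D t
          = ((n : ℝ) * SPLminus X D m * Kminus X D m)
              * (1 - dN X D m / Yat X m) * (1 - dC X D m / Ydag X D m) := by
            rw [hSm, hKm]; ring
        _ = Yat X m * (1 - dN X D m / Yat X m) * (1 - dC X D m / Ydag X D m) := by
            rw [hIH]
        _ = Yplus X m := by rw [e1, e2]
        _ = Yat X t := hYt.symm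

end Main
lemma L2 {n : ℕ} (X : Fin n → ℝ) (D : Fin n → Bool) (hn : 0 < n) (hX : ∀ i, 0 < X i) :
    ∀ k : ℕ, ∀ t : ℝ, ((times X).filter (fun u => u < t)).card ≤ k →
      0 < t → t ≤ tau X →
      ∑ u ∈ (times X).filter (fun u => u < t), dC X D u / SPL X D u
        = (n : ℝ) * (1 - Kminus X D t) := by
  intro k
  induction k with
  | zero =>
    intro t hcard ht htau
    have hF : (times X).filter (fun u => u < t) = ∅ :=
      Finset.card_eq_zero.1 (Nat.le_zero.1 hcard)
    unfold Kminus
    rw [hF]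
    simp
  | succ k ih =>
    intro t hcard ht htau
    by_cases hF : (times X).filter (fun u => u < t) = ∅
    · unfold Kminus
      rw [hF]
      simp
    · have hne : ((times X).filter (fun u => u < t)).Nonempty :=
        Finset.nonempty_iff_ne_empty.2 hF
      set m := ((times X).filter (fun u => u < t)).max' hne with hm_def
      have hm_filt := Finset.max'_mem _ hne
      rw [Finset.mem_filter] at hm_filt
      obtain ⟨hm_mem, hm_lt⟩ := hm_filt
      have hins : (times X).filter (fun u => u < t)
          = insert m ((times X).filter (fun u => u < m)) := by
        ext u
        simp only [Finset.mem_filter, Finset.mem_insert]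
        constructor
        · rintro ⟨hu, hlt⟩
          rcases eq_or_lt_of_le (Finset.le_max' ((times X).filter (fun v => v < t)) u
              (Finset.mem_filter.2 ⟨hu, hlt⟩)) with h | h
          · exact Or.inl h
          · exact Or.inr ⟨hu, h⟩
        · rintro (rfl | ⟨hu, hlt⟩)
          · exact ⟨hm_mem, hm_lt⟩
          · exact ⟨hu, hlt.trans hm_lt⟩
      have hnm : m ∉ (times X).filter (fun u => u < m) := by simp
      have hcard' : ((times X).filter (fun u => u < m)).card ≤ k := by
        have h2 := hcard
        rw [hins, Finset.card_insert_of_notMem hnm] at h2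
        omega
      have hm_pos : 0 < m := pos_of_mem_times X hX hm_mem
      have hm_tau : m ≤ tau X := le_tau X hn hm_mem
      have hm_lt_tau : m < tau X := lt_of_lt_of_le hm_lt htau
      have hnne : (n : ℝ) ≠ 0 := Nat.cast_ne_zero.2 hn.ne'
      have hYat_m : 0 < Yat X m := Yat_pos X hn hm_tau
      have hYdag_m : 0 < Ydag X D m := Ydag_pos X D hn hm_lt_tau
      have hL1 := L1 X D hn hX _ m le_rfl hm_pos hm_tau
      have hprod : (n : ℝ) * SPL X D m * Kminus X D m = Ydag X D m := by
        rw [SPL_eq]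
        calc (n : ℝ) * ((1 - dN X D m / Yat X m) * SPLminus X D m) * Kminus X D m
            = ((n : ℝ) * SPLminus X D m * Kminus X D m) * (1 - dN X D m / Yat X m) := by
              ring
          _ = Yat X m * (1 - dN X D m / Yat X m) := by rw [hL1]
          _ = Ydag X D m := by
              rw [mul_sub, mul_one, mul_div_cancel₀ _ (ne_of_gt hYat_m)]
              rfl
      have hSPLm_ne : SPL X D m ≠ 0 := by
        intro h0
        rw [h0] at hprod
        simp at hprod
        exact absurd hprod.symm (ne_of_gt hYdag_m)
      have hKm_ne : Kminus X D m ≠ 0 := by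
        intro h0
        rw [h0] at hprod
        simp at hprod
        exact absurd hprod.symm (ne_of_gt hYdag_m)
      have hkey : dC X D m / SPL X D m
          = (n : ℝ) * Kminus X D m * (dC X D m / Ydag X D m) := by
        rw [← hprod]
        field_simp
      have hKm : Kminus X D t = (1 - dC X D m / Ydag X D m) * Kminus X D m := by
        unfold Kminus
        rw [hins, Finset.prod_insert hnm]
      have hIH := ih m hcard' hm_pos hm_tau
      rw [hins, Finset.sum_insert hnm, hIH, hkey, hKm]
      ring

lemma main_step {n : ℕ} (X : Fin n → ℝ) (D : Fin n → Bool) (hn : 0 < n)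
    (hX : ∀ i, 0 < X i) (S : ℝ → ℝ)
    (hS : ∀ t : ℝ, 0 < t → t < tau X →
      S t = Yplus X t / (n : ℝ)
        + (S t / (n : ℝ))
          * ∑ u ∈ (times X).filter (fun u => u ≤ t), dC X D u / S u)
    {t : ℝ} (ht : 0 < t) (htau : t < tau X)
    (hprev : ∀ u ∈ (times X).filter (fun u => u < t), S u = SPL X D u) :
    S t = SPL X D t := by
  have hnne : (n : ℝ) ≠ 0 := Nat.cast_ne_zero.2 hn.ne'
  have hnpos : (0 : ℝ) < n := by exact_mod_cast hn
  have hYp : 0 < Yplus X t := Yplus_pos X hn htau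
  have heq := hS t ht htau
  have hSne : S t ≠ 0 := by
    intro h0
    rw [h0] at heq
    simp only [zero_div, zero_mul, add_zero] at heq
    have hpos : 0 < Yplus X t / n := div_pos hYp hnpos
    linarith
  have hsplit : ∑ u ∈ (times X).filter (fun u => u ≤ t), dC X D u / S u
      = dC X D t / S t + ∑ u ∈ (times X).filter (fun u => u < t), dC X D u / S u := by
    by_cases htm : t ∈ times X
    · rw [filter_le_eq_of_mem X htm, Finset.sum_insert (by simp)]
    · rw [filter_le_eq_of_not_mem X htm, dC_of_not_mem X D htm]
      simp
  have hsum_prev : ∑ u ∈ (times X).filter (fun u => u < t), dC X D u / S u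
      = ∑ u ∈ (times X).filter (fun u => u < t), dC X D u / SPL X D u :=
    Finset.sum_congr rfl (fun u hu => by rw [hprev u hu])
  have hL2 := L2 X D hn hX _ t le_rfl ht (le_of_lt htau)
  rw [hsplit, hsum_prev, hL2] at heq
  have hdc : S t * (dC X D t / S t) = dC X D t := mul_div_cancel₀ _ hSne
  have step1 : (n : ℝ) * S t
      = Yplus X t + S t * (dC X D t / S t) + S t * ((n : ℝ) * (1 - Kminus X D t)) := by
    calc (n : ℝ) * S t
        = (n : ℝ) * (Yplus X t / (n : ℝ)
            + (S t / (n : ℝ)) * (dC X D t / S t + (n : ℝ) * (1 - Kminus X D t))) := by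
          rw [← heq]
      _ = Yplus X t + S t * (dC X D t / S t) + S t * ((n : ℝ) * (1 - Kminus X D t)) := by
          field_simp
          ring
  rw [hdc] at step1
  have hmain : (n : ℝ) * S t * Kminus X D t = Ydag X D t := by
    rw [Ydag_eq]
    linear_combination step1
  have hYat : 0 < Yat X t := Yat_pos X hn (le_of_lt htau)
  have hL1 := L1 X D hn hX _ t le_rfl ht (le_of_lt htau)
  have hSPLside : (n : ℝ) * SPL X D t * Kminus X D t = Ydag X D t := by
    rw [SPL_eq]
    calc (n : ℝ) * ((1 - dN X D t / Yat X t) * SPLminus X D t) * Kminus X D t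
        = ((n : ℝ) * SPLminus X D t * Kminus X D t) * (1 - dN X D t / Yat X t) := by ring
      _ = Yat X t * (1 - dN X D t / Yat X t) := by rw [hL1]
      _ = Ydag X D t := by
          rw [mul_sub, mul_one, mul_div_cancel₀ _ (ne_of_gt hYat)]
          rfl
  have hYdagne : Ydag X D t ≠ 0 := ne_of_gt (Ydag_pos X D hn htau)
  have hKne : Kminus X D t ≠ 0 := by
    intro h0
    rw [h0] at hSPLside
    simp at hSPLside
    exact absurd hSPLside.symm hYdagne
  have hfin : (n : ℝ) * S t * Kminus X D t = (n : ℝ) * SPL X D t * Kminus X D t := by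
    rw [hmain, hSPLside]
  have h2 := mul_right_cancel₀ hKne hfin
  exact mul_left_cancel₀ hnne h2

/-- the failure product-limit estimator is the unique solution of Efron's
self-consistency equation on `(0, τ)`. -/
theorem stmt8 (n : ℕ) (hn : 0 < n) (X : Fin n → ℝ) (D : Fin n → Bool)
    (hX : ∀ i, 0 < X i) (S : ℝ → ℝ)
    (hS : ∀ t : ℝ, 0 < t → t < tau X →
      S t = Yplus X t / (n : ℝ)
        + (S t / (n : ℝ))
          * ∑ u ∈ (times X).filter (fun u => u ≤ t), dC X D u / S u) :
    ∀ t : ℝ, 0 < t → t < tau X → S t = SPL X D t := by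
  suffices H : ∀ k : ℕ, ∀ t : ℝ, ((times X).filter (fun u => u < t)).card ≤ k →
      0 < t → t < tau X → S t = SPL X D t by
    intro t ht htau
    exact H _ t le_rfl ht htau
  intro k
  induction k with
  | zero =>
    intro t hcard ht htau
    have hF : (times X).filter (fun u => u < t) = ∅ :=
      Finset.card_eq_zero.1 (Nat.le_zero.1 hcard)
    refine main_step X D hn hX S hS ht htau ?_
    intro u hu
    rw [hF] at hu
    exact absurd hu (Finset.notMem_empty _)
  | succ k ih =>
    intro t hcard ht htau
    refine main_step X D hn hX S hS ht htau ?_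
    intro u hu
    rw [Finset.mem_filter] at hu
    obtain ⟨hu_mem, hu_lt⟩ := hu
    have hu_pos : 0 < u := pos_of_mem_times X hX hu_mem
    have hss : (times X).filter (fun v => v < u) ⊂ (times X).filter (fun v => v < t) := by
      refine Finset.ssubset_iff_of_subset ?_ |>.2 ?_
      · intro v hv
        rw [Finset.mem_filter] at hv ⊢
        exact ⟨hv.1, hv.2.trans hu_lt⟩
      · exact ⟨u, Finset.mem_filter.2 ⟨hu_mem, hu_lt⟩, by simp⟩
    have hcard' : ((times X).filter (fun v => v < u)).card ≤ k := by
      have := Finset.card_lt_card hss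
      omega
    exact ih u hcard' hu_pos (hu_lt.trans htau)

end SurvStmt
end
end

section
/- (RTTR is an IPCW estimator.) For every real t with 0 ≤ t < τ, 1 − Ŝ_RTTR(t) = F̂_IPCW(t). Moreover, if ΔN(τ) = Y(τ) (all observations at the last observation time are failures), then 1 − Ŝ_RTTR(t) = F̂_IPCW(t) and Ŝ_RTTR(t) = S̃_IPCW(t) for every t ≥ 0. -/
open Finset
open scoped Classical

noncomputable section

namespace SurvStmt

section Helpers

variable {n : ℕ}

lemma card_filter_real (p : Fin n → Prop) [DecidablePred p] :
    ((Finset.univ.filter p).card : ℝ) = ∑ i : Fin n, if p i then (1:ℝ) else 0 := by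
  rw [Finset.sum_boole]

lemma Yat_pos_s18 (X : Fin n → ℝ) {v : ℝ} (hv : v ∈ times X) : 0 < Yat X v := by
  obtain ⟨i, _, hi⟩ := Finset.mem_image.mp hv
  have : i ∈ Finset.univ.filter (fun i => v ≤ X i) := by
    simp [hi.symm.le]
  have hpos : 0 < (Finset.univ.filter (fun i => v ≤ X i)).card :=
    Finset.card_pos.mpr ⟨i, this⟩
  unfold Yat
  exact_mod_cast hpos

lemma Yat_split (X : Fin n → ℝ) (D : Fin n → Bool) (u : ℝ) :
    Yat X u = Yplus X u + dN X D u + dC X D u := by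
  unfold Yat Yplus dN dC
  rw [card_filter_real, card_filter_real, card_filter_real, card_filter_real,
    ← Finset.sum_add_distrib, ← Finset.sum_add_distrib]
  apply Finset.sum_congr rfl
  intro i _
  rcases lt_trichotomy u (X i) with h | h | h
  · simp [h.le, h, ne_of_gt h]
  · subst h
    cases hD : D i <;> simp [hD]
  · simp [not_le.mpr h, lt_asymm h, h.ne]

lemma dN_nonneg_s18 (X : Fin n → ℝ) (D : Fin n → Bool) (u : ℝ) : 0 ≤ dN X D u := by
  unfold dN; positivity

lemma dC_nonneg_s18 (X : Fin n → ℝ) (D : Fin n → Bool) (u : ℝ) : 0 ≤ dC X D u := by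
  unfold dC; positivity

lemma Yplus_nonneg (X : Fin n → ℝ) (u : ℝ) : 0 ≤ Yplus X u := by
  unfold Yplus; positivity

lemma factor_eq (X : Fin n → ℝ) (D : Fin n → Bool) {u : ℝ} (hu : 0 < Yat X u) :
    (1 - dC X D u / Ydag X D u) * (1 - dN X D u / Yat X u) = Yplus X u / Yat X u := by
  have hsplit := Yat_split X D u
  have hdC := dC_nonneg_s18 X D u
  have hYp := Yplus_nonneg X u
  have hYdag : Ydag X D u = Yplus X u + dC X D u := by unfold Ydag; linarith
  by_cases h : Ydag X D u = 0
  · have hdC0 : dC X D u = 0 := by rw [hYdag] at h; linarith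
    have hYp0 : Yplus X u = 0 := by rw [hYdag] at h; linarith
    have hdN : dN X D u = Yat X u := by unfold Ydag at h; linarith
    rw [hdC0, hdN, hYp0, div_self hu.ne']
    simp
  · have h1 : 1 - dC X D u / Ydag X D u = Yplus X u / Ydag X D u := by
      rw [eq_div_iff h, sub_mul, one_mul, div_mul_cancel₀ _ h]
      linarith
    have h2 : 1 - dN X D u / Yat X u = Ydag X D u / Yat X u := by
      rw [eq_div_iff hu.ne', sub_mul, one_mul, div_mul_cancel₀ _ hu.ne']
      unfold Ydag; ring
    rw [h1, h2, div_mul_div_comm, mul_comm (Yplus X u) (Ydag X D u),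
      mul_div_mul_left _ _ h]

lemma prod_ratio (X : Fin n → ℝ) (hn : 0 < n) :
    ∀ k : ℕ, ∀ v : ℝ, ((times X).filter (fun u => u < v)).card = k →
    ∏ u ∈ (times X).filter (fun u => u < v), (Yplus X u / Yat X u) = Yat X v / n := by
  have hn' : (n : ℝ) ≠ 0 := Nat.cast_ne_zero.mpr hn.ne'
  intro k
  induction k with
  | zero =>
    intro v hv
    have hemp : (times X).filter (fun u => u < v) = ∅ := Finset.card_eq_zero.mp hv
    have hall : ∀ i, v ≤ X i := by
      intro i
      by_contra hlt
      push_neg at hlt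
      have : X i ∈ (times X).filter (fun u => u < v) := by
        simp only [Finset.mem_filter, times]
        exact ⟨Finset.mem_image_of_mem X (Finset.mem_univ i), hlt⟩
      simp [hemp] at this
    have hY : Yat X v = n := by
      unfold Yat
      rw [Finset.filter_true_of_mem (fun i _ => hall i)]
      simp
    rw [hemp, Finset.prod_empty, hY, div_self hn']
  | succ k ih =>
    intro v hv
    set s := (times X).filter (fun u => u < v) with hs
    have hne : s.Nonempty := Finset.card_pos.mp (by omega)
    set u0 := s.max' hne with hu0
    have hu0s : u0 ∈ s := s.max'_mem hne
    have hu0t : u0 ∈ times X := (Finset.mem_filter.mp hu0s).1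
    have hu0v : u0 < v := (Finset.mem_filter.mp hu0s).2
    have herase : s.erase u0 = (times X).filter (fun u => u < u0) := by
      ext u
      simp only [Finset.mem_erase, Finset.mem_filter, hs]
      constructor
      · rintro ⟨hne', ht, hlt⟩
        exact ⟨ht, lt_of_le_of_ne (s.le_max' u (by simp [hs, ht, hlt])) hne'⟩
      · rintro ⟨ht, hlt⟩
        exact ⟨hlt.ne, ht, hlt.trans hu0v⟩
    have hcard : ((times X).filter (fun u => u < u0)).card = k := by
      rw [← herase, Finset.card_erase_of_mem hu0s, hv]
      omega
    have hIH := ih u0 hcard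
    rw [← Finset.mul_prod_erase s _ hu0s, herase, hIH]
    have hYu0 : Yat X u0 ≠ 0 := (Yat_pos_s18 X hu0t).ne'
    have hYpv : Yplus X u0 = Yat X v := by
      have hset : Finset.univ.filter (fun i => u0 < X i)
          = Finset.univ.filter (fun i : Fin n => v ≤ X i) := by
        apply Finset.filter_congr
        intro i _
        constructor
        · intro hlt
          by_contra hge
          push_neg at hge
          have hmem : X i ∈ s := by
            rw [hs]
            simp only [Finset.mem_filter, times]
            exact ⟨Finset.mem_image_of_mem X (Finset.mem_univ i), hge⟩
          exact absurd (s.le_max' _ hmem) (not_le.mpr hlt)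
        · intro hge
          exact lt_of_lt_of_le hu0v hge
      unfold Yplus Yat
      rw [hset]
    rw [div_mul_div_comm, mul_comm (Yplus X u0) (Yat X u0),
      mul_div_mul_left _ _ hYu0, hYpv]

lemma KS (X : Fin n → ℝ) (D : Fin n → Bool) (hn : 0 < n) (v : ℝ) :
    Kminus X D v * SPLminus X D v = Yat X v / n := by
  unfold Kminus SPLminus
  rw [← Finset.prod_mul_distrib,
    Finset.prod_congr rfl
      (fun u hu => factor_eq X D (Yat_pos_s18 X (Finset.mem_filter.mp hu).1))]
  exact prod_ratio X hn _ v rfl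

lemma Kminus_ne (X : Fin n → ℝ) (D : Fin n → Bool) (hn : 0 < n) {v : ℝ}
    (hv : v ∈ times X) : Kminus X D v ≠ 0 ∧ SPLminus X D v ≠ 0 := by
  have hKS := KS X D hn v
  have hY : Yat X v / n ≠ 0 :=
    div_ne_zero (Yat_pos_s18 X hv).ne' (Nat.cast_ne_zero.mpr hn.ne')
  rw [← hKS] at hY
  exact ⟨left_ne_zero_of_mul hY, right_ne_zero_of_mul hY⟩

lemma term_eq (X : Fin n → ℝ) (D : Fin n → Bool) (hn : 0 < n) {v : ℝ}
    (hv : v ∈ times X) :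
    dN X D v / ((n:ℝ) * Kminus X D v) = SPLminus X D v * (dN X D v / Yat X v) := by
  have hKS := KS X D hn v
  have hY : Yat X v ≠ 0 := (Yat_pos_s18 X hv).ne'
  have hn' : (n : ℝ) ≠ 0 := Nat.cast_ne_zero.mpr hn.ne'
  obtain ⟨hK, hS⟩ := Kminus_ne X D hn hv
  have hKS' : (n:ℝ) * (Kminus X D v * SPLminus X D v) = Yat X v := by
    rw [hKS, mul_div_cancel₀ _ hn']
  field_simp
  linear_combination (-(dN X D v)) * hKS'

lemma sum_tel (X : Fin n → ℝ) (D : Fin n → Bool) :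
    ∀ k : ℕ, ∀ w : ℝ, ((times X).filter (fun u => u < w)).card = k →
    ∑ v ∈ (times X).filter (fun u => u < w), SPLminus X D v * (dN X D v / Yat X v)
      = 1 - SPLminus X D w := by
  intro k
  induction k with
  | zero =>
    intro w hw
    have hemp : (times X).filter (fun u => u < w) = ∅ := Finset.card_eq_zero.mp hw
    have : SPLminus X D w = 1 := by unfold SPLminus; rw [hemp, Finset.prod_empty]
    rw [hemp, Finset.sum_empty, this]
    ring
  | succ k ih =>
    intro w hw
    set s := (times X).filter (fun u => u < w) with hs
    have hne : s.Nonempty := Finset.card_pos.mp (by omega)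
    set u0 := s.max' hne with hu0
    have hu0s : u0 ∈ s := s.max'_mem hne
    have hu0t : u0 ∈ times X := (Finset.mem_filter.mp hu0s).1
    have hu0w : u0 < w := (Finset.mem_filter.mp hu0s).2
    have herase : s.erase u0 = (times X).filter (fun u => u < u0) := by
      ext u
      simp only [Finset.mem_erase, Finset.mem_filter, hs]
      constructor
      · rintro ⟨hne', ht, hlt⟩
        exact ⟨ht, lt_of_le_of_ne (s.le_max' u (by simp [hs, ht, hlt])) hne'⟩
      · rintro ⟨ht, hlt⟩
        exact ⟨hlt.ne, ht, hlt.trans hu0w⟩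
    have hcard : ((times X).filter (fun u => u < u0)).card = k := by
      rw [← herase, Finset.card_erase_of_mem hu0s, hw]
      omega
    have hIH := ih u0 hcard
    have hSw : SPLminus X D w = SPLminus X D u0 * (1 - dN X D u0 / Yat X u0) := by
      unfold SPLminus
      rw [← Finset.prod_erase_mul s _ hu0s, herase]
    rw [← Finset.add_sum_erase s _ hu0s, herase, hIH, hSw]
    ring

lemma sum_group (X : Fin n → ℝ) (D : Fin n → Bool) (p : ℝ → Prop) [DecidablePred p] :
    ∑ i : Fin n,
      (if D i = true then (1:ℝ) else 0) * (if p (X i) then (1:ℝ) else 0) / Kminus X D (X i)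
      = ∑ v ∈ (times X).filter (fun v => p v), dN X D v / Kminus X D v := by
  rw [← Finset.sum_fiberwise_of_maps_to
      (fun i (_ : i ∈ Finset.univ) => (Finset.mem_image_of_mem X (Finset.mem_univ i) : X i ∈ times X))
      (fun i => (if D i = true then (1:ℝ) else 0) * (if p (X i) then (1:ℝ) else 0) / Kminus X D (X i)),
    Finset.sum_filter]
  apply Finset.sum_congr rfl
  intro v _
  have hinner : ∀ i ∈ Finset.univ.filter (fun i => X i = v),
      (if D i = true then (1:ℝ) else 0) * (if p (X i) then (1:ℝ) else 0) / Kminus X D (X i)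
        = (if D i = true then (1:ℝ) else 0) * ((if p v then (1:ℝ) else 0) / Kminus X D v) := by
    intro i hi
    rw [(Finset.mem_filter.mp hi).2, mul_div_assoc]
  rw [Finset.sum_congr rfl hinner, ← Finset.sum_mul, Finset.sum_boole,
    Finset.filter_filter]
  show ((Finset.univ.filter (fun i => X i = v ∧ D i = true)).card : ℝ) * _ = _
  rw [show ((Finset.univ.filter (fun i => X i = v ∧ D i = true)).card : ℝ) = dN X D v from rfl]
  split_ifs with h
  · rw [mul_one_div]
  · simp

end Helpers

/-- RTTR is an IPCW estimator: for `0 ≤ t < τ`,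
`1 − Ŝ_RTTR(t) = F̂_IPCW(t)`; moreover, if `ΔN(τ) = Y(τ)`, then for every `t ≥ 0`,
`1 − Ŝ_RTTR(t) = F̂_IPCW(t)` and `Ŝ_RTTR(t) = S̃_IPCW(t)`. -/
theorem stmt18 (n : ℕ) (hn : 0 < n) (X : Fin n → ℝ) (D : Fin n → Bool)
    (hX : ∀ i, 0 < X i) :
    (∀ t : ℝ, 0 ≤ t → t < tau X → 1 - SRTTR X D t = FIPCW X D t)
    ∧ (dN X D (tau X) = Yat X (tau X) →
        ∀ t : ℝ, 0 ≤ t →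
          1 - SRTTR X D t = FIPCW X D t ∧ SRTTR X D t = SIPCW X D t) := by
  classical
  have hn' : (n : ℝ) ≠ 0 := Nat.cast_ne_zero.mpr hn.ne'
  -- τ facts
  have htne : (times X).Nonempty := ⟨X ⟨0, hn⟩, Finset.mem_image_of_mem X (Finset.mem_univ _)⟩
  have htau_mem : tau X ∈ times X := by
    have h1 : ((times X).max' htne : WithBot ℝ) = (times X).max := Finset.coe_max' htne
    have : tau X = (times X).max' htne := by
      unfold tau
      rw [← h1, WithBot.unbotD_coe]
    rw [this]
    exact (times X).max'_mem htne
  have hle_tau : ∀ v ∈ times X, v ≤ tau X := by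
    intro v hv
    have h1 : ((times X).max' htne : WithBot ℝ) = (times X).max := Finset.coe_max' htne
    have heq : tau X = (times X).max' htne := by
      unfold tau
      rw [← h1, WithBot.unbotD_coe]
    rw [heq]
    exact (times X).le_max' v hv
  -- FIPCW as a sum over observed times
  have hF : ∀ t : ℝ, FIPCW X D t
      = ∑ v ∈ (times X).filter (fun v => v ≤ t), dN X D v / ((n:ℝ) * Kminus X D v) := by
    intro t
    unfold FIPCW
    rw [sum_group X D (fun v => v ≤ t), Finset.mul_sum]
    exact Finset.sum_congr rfl (fun v _ => by ring)
  -- the RTTR sum equals the IPCW sum, under either hypothesis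
  have hsummand : ∀ t : ℝ,
      (∀ v ∈ (times X).filter (fun v => v ≤ t),
        (Jw X D v * dN X D v * (if v < tau X then (1:ℝ) else 0)
          + Jw X D (tau X) * Yat X (tau X) * (if v = tau X then (1:ℝ) else 0))
        = dN X D v / ((n:ℝ) * Kminus X D v)) →
      1 - SRTTR X D t = FIPCW X D t := by
    intro t h
    unfold SRTTR
    rw [hF t, sub_sub_cancel]
    exact Finset.sum_congr rfl h
  have hpart1 : ∀ t : ℝ, 0 ≤ t → t < tau X → 1 - SRTTR X D t = FIPCW X D t := by
    intro t _ htlt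
    apply hsummand t
    intro v hv
    have hvt : v ≤ t := (Finset.mem_filter.mp hv).2
    have hvτ : v < tau X := lt_of_le_of_lt hvt htlt
    rw [if_pos hvτ, if_neg hvτ.ne]
    unfold Jw
    ring
  refine ⟨hpart1, ?_⟩
  intro hτeq t ht
  have hfirst : 1 - SRTTR X D t = FIPCW X D t := by
    apply hsummand t
    intro v hv
    have hvm : v ∈ times X := (Finset.mem_filter.mp hv).1
    by_cases hvτ : v = tau X
    · rw [if_neg (by rw [hvτ]; exact lt_irrefl _), if_pos hvτ, hvτ, ← hτeq]
      unfold Jw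
      ring
    · have hlt : v < tau X := lt_of_le_of_ne (hle_tau v hvm) hvτ
      rw [if_pos hlt, if_neg hvτ]
      unfold Jw
      ring
  refine ⟨hfirst, ?_⟩
  -- total mass is 1
  have htotal : FIPCW X D t + SIPCW X D t = 1 := by
    have hsplitsum : FIPCW X D t + SIPCW X D t
        = (1 / (n:ℝ)) * ∑ i : Fin n,
            (if D i = true then (1:ℝ) else 0) * (if X i ≤ tau X then (1:ℝ) else 0)
              / Kminus X D (X i) := by
      unfold FIPCW SIPCW
      rw [← mul_add, ← Finset.sum_add_distrib]
      congr 1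
      apply Finset.sum_congr rfl
      intro i _
      have hτi : X i ≤ tau X := hle_tau (X i) (Finset.mem_image_of_mem X (Finset.mem_univ i))
      rw [if_pos hτi, ← add_div, ← mul_add]
      congr 2
      split_ifs with h1 h2 <;> first | ring1 | linarith
    rw [hsplitsum, sum_group X D (fun v => v ≤ tau X),
      Finset.filter_true_of_mem hle_tau, Finset.mul_sum]
    have hterm : ∀ v ∈ times X,
        (1 / (n:ℝ)) * (dN X D v / Kminus X D v)
          = SPLminus X D v * (dN X D v / Yat X v) := by
      intro v hv
      rw [← term_eq X D hn hv]
      ring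
    rw [Finset.sum_congr rfl hterm]
    have hfilt : (times X).filter (fun u => u < tau X + 1) = times X :=
      Finset.filter_true_of_mem (fun v hv => by linarith [hle_tau v hv])
    have htel := sum_tel X D ((times X).filter (fun u => u < tau X + 1)).card (tau X + 1) rfl
    rw [hfilt] at htel
    rw [htel]
    have hSz : SPLminus X D (tau X + 1) = 0 := by
      unfold SPLminus
      rw [hfilt]
      apply Finset.prod_eq_zero htau_mem
      rw [hτeq, div_self (Yat_pos_s18 X htau_mem).ne']
      ring
    rw [hSz]
    ring
  have := hfirst
  linarith


end SurvStmt
end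
end
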